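/- MMax worst-case guarantee after one iteration: let f_1,…,f_m be monotone submodular with f_i(∅)=0, define h_i(X) = Σ_{j∈X} f_i({j}), and suppose the partition π̂ = (Â_1,…,Â_m) satisfies min_i h_i(Â_i) ≥ α · max_π min_i h_i(A_i^π) for some α ∈ (0,1]. Then min_i f_i(Â_i) ≥ α · [min_i (1+(|Â_i|−1)(1−κ_{f_i}(Â_i)))/|Â_i|] · max_π min_i f_i(A_i^π), where κ_f(A) = 1 − min_{v∈A} f(v|A\v)/f({v}). -/

import Mathlib

open Finset

def Submodular {V : Type*} [DecidableEq V] (f : Finset V → ℝ) : Prop :=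
  ∀ S T : Finset V, f (S ∪ T) + f (S ∩ T) ≤ f S + f T

def IsPartition {V : Type*} [Fintype V] [DecidableEq V] {m : ℕ}
    (A : Fin m → Finset V) : Prop :=
  (∀ i j, i ≠ j → Disjoint (A i) (A j)) ∧ Finset.univ.biUnion A = Finset.univ

lemma subadd {V : Type*} [DecidableEq V] (f : Finset V → ℝ)
    (hsub : Submodular f) (hnorm : f ∅ = 0) (X : Finset V) :
    f X ≤ ∑ j ∈ X, f {j} := by
  induction X using Finset.induction_on with
  | empty => simp [hnorm]
  | @insert a s ha ih =>
    have := hsub {a} s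
    rw [Finset.sum_insert ha]
    have hint : ({a} : Finset V) ∩ s = ∅ := by
      simp [Finset.singleton_inter_of_notMem ha]
    have hun : ({a} : Finset V) ∪ s = insert a s := by rw [Finset.insert_eq]
    rw [hint, hun, hnorm] at this
    linarith

lemma telescope {V : Type*} [DecidableEq V] (f : Finset V → ℝ)
    (hsub : Submodular f) (X : Finset V) (v : V) (hv : v ∈ X) :
    f {v} + ∑ u ∈ X.erase v, (f X - f (X.erase u)) ≤ f X := by
  suffices h : ∀ S : Finset V, v ∉ S → S ⊆ X.erase v →
      f {v} + ∑ u ∈ S, (f X - f (X.erase u)) ≤ f (insert v S) by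
    have := h (X.erase v) (Finset.notMem_erase v X) (le_refl _)
    rwa [Finset.insert_erase hv] at this
  intro S
  induction S using Finset.induction_on with
  | empty => intro _ _; simp
  | @insert u s hu ih =>
    intro hvS hsS
    have hvs : v ∉ s := fun h => hvS (Finset.mem_insert_of_mem h)
    have hss : s ⊆ X.erase v := fun x hx => hsS (Finset.mem_insert_of_mem hx)
    have hsX : s ⊆ X := hss.trans (Finset.erase_subset v X)
    have huX : u ∈ X := Finset.mem_of_mem_erase (hsS (Finset.mem_insert_self u s))
    have hvu : v ≠ u := by
      intro h
      exact (Finset.notMem_erase v X) (h ▸ hsS (Finset.mem_insert_self u s))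
    have hus : u ∉ s := hu
    have h1 : insert u (insert v s) ∪ X.erase u = X := by
      ext x
      simp only [Finset.mem_union, Finset.mem_insert, Finset.mem_erase]
      constructor
      · rintro ((rfl | rfl | hx) | ⟨_, hx⟩)
        · exact huX
        · exact hv
        · exact hsX hx
        · exact hx
      · intro hx
        by_cases hxu : x = u
        · exact Or.inl (Or.inl hxu)
        · exact Or.inr ⟨hxu, hx⟩
    have h2 : insert u (insert v s) ∩ X.erase u = insert v s := by
      ext x
      simp only [Finset.mem_inter, Finset.mem_insert, Finset.mem_erase]
      constructor
      · rintro ⟨rfl | h, hne, _⟩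
        · exact absurd rfl hne
        · exact h
      · rintro (rfl | hx)
        · exact ⟨Or.inr (Or.inl rfl), hvu, hv⟩
        · refine ⟨Or.inr (Or.inr hx), ?_, hsX hx⟩
          rintro rfl; exact hus hx
    have hkey := hsub (insert u (insert v s)) (X.erase u)
    rw [h1, h2] at hkey
    have ihh := ih hvs hss
    have hcomm : insert v (insert u s) = insert u (insert v s) := by
      ext x; simp only [Finset.mem_insert]; tauto
    rw [Finset.sum_insert hus, hcomm]
    linarith

lemma curvbound {V : Type*} [DecidableEq V] (f : Finset V → ℝ)
    (hsub : Submodular f) (hmono : ∀ S T : Finset V, S ⊆ T → f S ≤ f T)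
    (hpos : ∀ v : V, 0 < f {v}) (X : Finset V) (hX : X.Nonempty) :
    (1 + ((X.card : ℝ) - 1) *
        X.inf' hX (fun v => (f X - f (X.erase v)) / f {v})) / (X.card : ℝ) *
      (∑ j ∈ X, f {j}) ≤ f X := by
  set t := X.inf' hX (fun v => (f X - f (X.erase v)) / f {v}) with ht
  set h := ∑ j ∈ X, f {j} with hh
  set n := (X.card : ℝ) with hn
  have hn1 : 1 ≤ n := by
    rw [hn]
    exact_mod_cast Finset.one_le_card.2 hX
  have hn0 : 0 < n := lt_of_lt_of_le one_pos hn1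
  -- pointwise: for each v∈X, (1 - t) * f {v} + t * h ≤ f X
  have hpt : ∀ v ∈ X, (1 - t) * f {v} + t * h ≤ f X := by
    intro v hvX
    have htel := telescope f hsub X v hvX
    have hterm : ∀ u ∈ X.erase v, t * f {u} ≤ f X - f (X.erase u) := by
      intro u hu
      have huX := Finset.mem_of_mem_erase hu
      have hle : t ≤ (f X - f (X.erase u)) / f {u} := Finset.inf'_le _ huX
      calc t * f {u} ≤ ((f X - f (X.erase u)) / f {u}) * f {u} :=
            mul_le_mul_of_nonneg_right hle (le_of_lt (hpos u))
        _ = f X - f (X.erase u) := div_mul_cancel₀ _ (ne_of_gt (hpos u))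
    have hsum : t * (h - f {v}) ≤ ∑ u ∈ X.erase v, (f X - f (X.erase u)) := by
      have : ∑ u ∈ X.erase v, t * f {u} ≤ ∑ u ∈ X.erase v, (f X - f (X.erase u)) :=
        Finset.sum_le_sum hterm
      have hsplit : ∑ u ∈ X.erase v, f {u} = h - f {v} := by
        rw [hh, ← Finset.add_sum_erase X _ hvX]; ring
      rw [← Finset.mul_sum, hsplit] at this
      exact this
    nlinarith [htel, hsum]
  -- sum over v
  have hsumall : (1 - t) * h + t * h * n ≤ n * f X := by
    have := Finset.sum_le_sum hpt
    have hL : ∑ v ∈ X, ((1 - t) * f {v} + t * h) = (1 - t) * h + t * h * n := by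
      rw [Finset.sum_add_distrib, ← Finset.mul_sum, ← hh, Finset.sum_const, hn]
      push_cast; ring
    have hR : ∑ _v ∈ X, f X = n * f X := by
      rw [Finset.sum_const, hn]; push_cast; ring
    rw [hL, hR] at this
    exact this
  rw [div_mul_eq_mul_div, div_le_iff₀ hn0]
  nlinarith [hsumall]

theorem stmt17 {V : Type*} [Fintype V] [DecidableEq V] {m : ℕ}
    (hne : (Finset.univ : Finset (Fin m)).Nonempty)
    (f : Fin m → Finset V → ℝ)
    (hsub : ∀ i, Submodular (f i))
    (hmono : ∀ i, ∀ S T : Finset V, S ⊆ T → f i S ≤ f i T)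
    (hnorm : ∀ i, f i ∅ = 0)
    (hpos : ∀ i (v : V), 0 < f i {v})
    (α : ℝ) (hα0 : 0 < α) (hα1 : α ≤ 1)
    (πh : Fin m → Finset V) (hπh : IsPartition πh)
    (hblk : ∀ i, (πh i).Nonempty)
    (happrox : ∀ π : Fin m → Finset V, IsPartition π →
      α * univ.inf' hne (fun i => ∑ j ∈ π i, f i {j}) ≤
        univ.inf' hne (fun i => ∑ j ∈ πh i, f i {j})) :
    ∀ π : Fin m → Finset V, IsPartition π →
      α * univ.inf' hne (fun i =>
            (1 + (((πh i).card : ℝ) - 1) *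
              (πh i).inf' (hblk i) (fun v => (f i (πh i) - f i ((πh i).erase v)) / f i {v})) /
            ((πh i).card : ℝ)) *
          univ.inf' hne (fun i => f i (π i)) ≤
        univ.inf' hne (fun i => f i (πh i)) := by
  intro π hπ
  set c : Fin m → ℝ := fun i =>
    (1 + (((πh i).card : ℝ) - 1) *
        (πh i).inf' (hblk i) (fun v => (f i (πh i) - f i ((πh i).erase v)) / f i {v})) /
      ((πh i).card : ℝ) with hc
  set F := univ.inf' hne (fun i => f i (π i)) with hF
  set H := univ.inf' hne (fun i => ∑ j ∈ π i, f i {j}) with hH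
  set Hh := univ.inf' hne (fun i => ∑ j ∈ πh i, f i {j}) with hHh
  set C := univ.inf' hne c with hC
  have hciF : ∀ i, c i * (∑ j ∈ πh i, f i {j}) ≤ f i (πh i) := fun i =>
    curvbound (f i) (hsub i) (hmono i) (hpos i) (πh i) (hblk i)
  have hci0 : ∀ i, 0 ≤ c i := by
    intro i
    have hn1 : (1 : ℝ) ≤ ((πh i).card : ℝ) := by
      exact_mod_cast Finset.one_le_card.2 (hblk i)
    have ht0 : 0 ≤ (πh i).inf' (hblk i)
        (fun v => (f i (πh i) - f i ((πh i).erase v)) / f i {v}) := by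
      apply Finset.le_inf'
      intro v hv
      apply div_nonneg _ (le_of_lt (hpos i v))
      have := hmono i ((πh i).erase v) (πh i) (Finset.erase_subset v (πh i))
      linarith
    apply div_nonneg _ (by linarith)
    nlinarith
  have hC0 : 0 ≤ C := Finset.le_inf' _ _ (fun i _ => hci0 i)
  have hFH : F ≤ H := by
    apply Finset.le_inf'
    intro i _
    exact le_trans (Finset.inf'_le _ (Finset.mem_univ i))
      (subadd (f i) (hsub i) (hnorm i) (π i))
  have hαFHh : α * F ≤ Hh := le_trans
    (mul_le_mul_of_nonneg_left hFH (le_of_lt hα0)) (happrox π hπ)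
  have hHh0 : 0 ≤ Hh := by
    apply Finset.le_inf'
    intro i _
    exact Finset.sum_nonneg (fun j _ => le_of_lt (hpos i j))
  apply Finset.le_inf'
  intro i _
  calc α * C * F = C * (α * F) := by ring
    _ ≤ C * Hh := mul_le_mul_of_nonneg_left hαFHh hC0
    _ ≤ c i * Hh := mul_le_mul_of_nonneg_right (Finset.inf'_le _ (Finset.mem_univ i)) hHh0
    _ ≤ c i * (∑ j ∈ πh i, f i {j}) :=
        mul_le_mul_of_nonneg_left (Finset.inf'_le _ (Finset.mem_univ i)) (hci0 i)
    _ ≤ f i (πh i) := hciF i
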